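/- Let 𝔸 be an infinite type with decidable equality and let X be a set equipped with an action of the group of finitary permutations of 𝔸 (permutations fixing all but finitely many elements). If A and B are finite subsets of 𝔸 that both support an element x ∈ X (i.e., every finitary permutation fixing each element of A pointwise fixes x, and likewise for B), then A ∩ B also supports x. -/

import Mathlib

/-- The subgroup of finitary permutations of `𝔸`: permutations moving
only finitely many elements. -/
def FinPerm (𝔸 : Type*) : Subgroup (Equiv.Perm 𝔸) where
  carrier := {π : Equiv.Perm 𝔸 | {a | π a ≠ a}.Finite}
  one_mem' := by simp
  mul_mem' := by
    intro π σ hπ hσ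
    refine (hπ.union hσ).subset ?_
    intro a ha
    by_contra h
    simp only [Set.mem_union, Set.mem_setOf_eq, not_or, not_not] at h
    exact ha (by simp [Equiv.Perm.mul_apply, h.1, h.2])
  inv_mem' := by
    intro π hπ
    refine hπ.subset ?_
    intro a ha
    simp only [Set.mem_setOf_eq] at *
    intro h
    exact ha (by nth_rewrite 1 [← h]; simp)

/-- `A` supports `x`: every finitary permutation fixing `A` pointwise fixes `x`. -/
def NSupports (𝔸 : Type*) {X : Type*} [MulAction (FinPerm 𝔸) X] (A : Set 𝔸) (x : X) : Prop :=
  ∀ π : FinPerm 𝔸, (∀ a ∈ A, π.1 a = a) → π • x = x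

lemma swap_mem_finPerm {𝔸 : Type*} [DecidableEq 𝔸] (a b : 𝔸) :
    Equiv.swap a b ∈ FinPerm 𝔸 := by
  show {t | Equiv.swap a b t ≠ t}.Finite
  refine Set.Finite.subset ((Set.finite_singleton b).insert a) ?_
  intro t ht
  simp only [Set.mem_setOf_eq] at ht
  by_contra h
  simp only [Set.mem_insert_iff, Set.mem_singleton_iff, not_or] at h
  exact ht (Equiv.swap_apply_of_ne_of_ne h.1 h.2)

/-- A swap of two elements outside a support set fixes `x`. -/
lemma swap_smul_of_not_mem {𝔸 X : Type*} [DecidableEq 𝔸] [MulAction (FinPerm 𝔸) X]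
    (x : X) (A : Set 𝔸) (hAsupp : NSupports 𝔸 A x) {a b : 𝔸}
    (ha : a ∉ A) (hb : b ∉ A) :
    (⟨Equiv.swap a b, swap_mem_finPerm a b⟩ : FinPerm 𝔸) • x = x := by
  apply hAsupp
  intro t ht
  exact Equiv.swap_apply_of_ne_of_ne (fun h => ha (h ▸ ht)) (fun h => hb (h ▸ ht))

lemma swap_smul_key {𝔸 X : Type*} [Infinite 𝔸] [DecidableEq 𝔸] [MulAction (FinPerm 𝔸) X]
    (x : X) (A B : Set 𝔸) (hA : A.Finite) (hB : B.Finite)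
    (hAsupp : NSupports 𝔸 A x) (hBsupp : NSupports 𝔸 B x)
    {a b : 𝔸} (hab : a ≠ b) (ha : a ∉ A ∩ B) (hb : b ∉ A ∩ B) :
    (⟨Equiv.swap a b, swap_mem_finPerm a b⟩ : FinPerm 𝔸) • x = x := by
  obtain ⟨c, hc⟩ := ((hA.union hB).union ((Set.finite_singleton b).insert a)).infinite_compl.nonempty
  simp only [Set.mem_compl_iff, Set.mem_union, Set.mem_insert_iff, Set.mem_singleton_iff,
    not_or] at hc
  obtain ⟨⟨hcA, hcB⟩, hca, hcb⟩ := hc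
  have key : ∀ d : 𝔸, d ∉ A ∩ B → (⟨Equiv.swap d c, swap_mem_finPerm d c⟩ : FinPerm 𝔸) • x = x := by
    intro d hd
    rw [Set.mem_inter_iff, not_and_or] at hd
    rcases hd with hd | hd
    · exact swap_smul_of_not_mem x A hAsupp hd hcA
    · exact swap_smul_of_not_mem x B hBsupp hd hcB
  have hdecomp : (⟨Equiv.swap a b, swap_mem_finPerm a b⟩ : FinPerm 𝔸) =
      ⟨Equiv.swap a c, swap_mem_finPerm a c⟩ * ⟨Equiv.swap b c, swap_mem_finPerm b c⟩ *
        ⟨Equiv.swap a c, swap_mem_finPerm a c⟩ := by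
    apply Subtype.ext
    show Equiv.swap a b = Equiv.swap a c * Equiv.swap b c * Equiv.swap a c
    have h := Equiv.swap_mul_swap_mul_swap (x := b) (y := c) (z := a)
      (fun h => hcb h.symm) (Ne.symm hab)
    rw [Equiv.swap_comm c a] at h
    exact h.symm
  rw [hdecomp, mul_smul, mul_smul, key a ha, key b hb, key a ha]

theorem stmt_0 {𝔸 X : Type*} [Infinite 𝔸] [DecidableEq 𝔸] [MulAction (FinPerm 𝔸) X]
    (x : X) (A B : Set 𝔸) (hA : A.Finite) (hB : B.Finite)
    (hAsupp : NSupports 𝔸 A x) (hBsupp : NSupports 𝔸 B x) :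
    NSupports 𝔸 (A ∩ B) x := by
  suffices H : ∀ (n : ℕ) (π : FinPerm 𝔸) (hfin : {a | π.1 a ≠ a}.Finite),
      hfin.toFinset.card ≤ n → (∀ a ∈ A ∩ B, π.1 a = a) → π • x = x by
    intro π hπ
    exact H (π.2.toFinset.card) π π.2 le_rfl hπ
  intro n
  induction n with
  | zero =>
    intro π hfin hcard hfix
    have : π = 1 := by
      apply Subtype.ext
      ext t
      by_contra h
      have : t ∈ hfin.toFinset := by simpa using h
      simp [Finset.card_eq_zero.mp (Nat.le_zero.mp hcard)] at this
    rw [this, one_smul]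
  | succ n ih =>
    intro π hfin hcard hfix
    by_cases hs : ∀ s, π.1 s = s
    · have : π = 1 := Subtype.ext (Equiv.ext hs)
      rw [this, one_smul]
    push_neg at hs
    obtain ⟨s, hs⟩ := hs
    have hsAB : s ∉ A ∩ B := fun h => hs (hfix s h)
    have hπsAB : π.1 s ∉ A ∩ B := by
      intro h
      have h1 : π.1 (π.1 s) = π.1 s := hfix _ h
      exact hs (π.1.injective h1)
    set τ : FinPerm 𝔸 := ⟨Equiv.swap s (π.1 s), swap_mem_finPerm _ _⟩ with hτ
    have hτx : τ • x = x :=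
      swap_smul_key x A B hA hB hAsupp hBsupp (Ne.symm hs) hsAB hπsAB
    set π' : FinPerm 𝔸 := τ * π with hπ'
    have hfix' : ∀ a ∈ A ∩ B, π'.1 a = a := by
      intro a ha
      have h1 : π.1 a = a := hfix a ha
      have has : a ≠ s := fun h => hs (h ▸ h1)
      have haπs : a ≠ π.1 s := fun h => has (π.1.injective (h1.trans h))
      show Equiv.swap s (π.1 s) (π.1 a) = a
      rw [h1]
      exact Equiv.swap_apply_of_ne_of_ne has haπs
    have hfin' : {a | π'.1 a ≠ a}.Finite := π'.2
    have hsub : hfin'.toFinset ⊆ hfin.toFinset.erase s := by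
      intro t ht
      simp only [Set.Finite.mem_toFinset, Set.mem_setOf_eq] at ht
      by_cases hts : t = s
      · subst hts
        exfalso
        apply ht
        show Equiv.swap t (π.1 t) (π.1 t) = t
        exact Equiv.swap_apply_right _ _
      · have hmoves : π.1 t ≠ t := by
          by_cases htπ : t = π.1 s
          · exact fun h => hts (π.1.injective (h.trans htπ))
          · intro h2
            apply ht
            show Equiv.swap s (π.1 s) (π.1 t) = t
            rw [h2]
            exact Equiv.swap_apply_of_ne_of_ne hts htπ
        simp [Finset.mem_erase, hts, hmoves]
    have hcard' : hfin'.toFinset.card ≤ n := by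
      have h1 : s ∈ hfin.toFinset := by simpa using hs
      have := Finset.card_le_card hsub
      have h2 := Finset.card_erase_of_mem h1
      omega
    have hπ'x : π' • x = x := ih π' hfin' hcard' hfix'
    have hττ : τ * τ = 1 := by
      apply Subtype.ext
      show Equiv.swap s (π.1 s) * Equiv.swap s (π.1 s) = 1
      exact Equiv.swap_mul_self _ _
    calc π • x = (τ * τ) • (π • x) := by rw [hττ, one_smul]
      _ = τ • (π' • x) := by rw [mul_smul, hπ', mul_smul]
      _ = x := by rw [hπ'x, hτx]
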